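/- Let G be a banana path containing a string of consecutive vertices v_k, ..., v_{k+ℓ} such that the edge bunch sizes between consecutive vertices of the string follow the repeating pattern a_1, ..., a_s, and set L = lcm(a_1, ..., a_s). If ℓ + 1 ≥ s·L² and D is a positive-rank divisor on G, then some effective divisor linearly equivalent to D places at least L chips in total on the vertices v_k, ..., v_{k+ℓ}. -/

import Mathlib

open Finset

attribute [local instance] Classical.propDecidable

noncomputable section

/-- A finite loopless multigraph on vertex type `V`, given by a symmetric
edge-multiplicity function: `mul u v` is the number of edges joining `u` and `v`. -/
structure Multigraph (V : Type) [Fintype V] where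
  mul : V → V → ℕ
  symm : ∀ u v, mul u v = mul v u
  loopless : ∀ v, mul v v = 0

namespace Multigraph

variable {V : Type} [Fintype V]

/-- The underlying simple graph of a multigraph. -/
def underlying (G : Multigraph V) : SimpleGraph V where
  Adj u v := 0 < G.mul u v
  symm := by
    refine ⟨fun u v h => ?_⟩
    rwa [G.symm] at h
  loopless := by
    refine ⟨fun v h => ?_⟩
    simp [G.loopless] at h

/-- A multigraph is connected if its underlying simple graph is. -/
def Connected (G : Multigraph V) : Prop := G.underlying.Connected

/-- A banana tree is a multigraph whose underlying simple graph is a tree. -/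
def IsBananaTree (G : Multigraph V) : Prop := G.underlying.IsTree

/-- The valence (degree) of a vertex. -/
def valence (G : Multigraph V) (v : V) : ℕ := ∑ w, G.mul v w

/-- The number of edges of a multigraph. -/
def edgeCount (G : Multigraph V) : ℕ := (∑ u, ∑ v, G.mul u v) / 2

/-- The genus (first Betti number) `|E| - |V| + 1` of a connected multigraph. -/
def genus (G : Multigraph V) : ℕ := G.edgeCount + 1 - Fintype.card V

/-- The degree of a divisor: the total number of chips. -/
def degree (D : V → ℤ) : ℤ := ∑ v, D v

/-- A divisor is effective if it is nonnegative everywhere. -/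
def Effective (D : V → ℤ) : Prop := ∀ v, 0 ≤ D v

/-- Linear equivalence of divisors: `D'` is obtained from `D` by a finite sequence of
chip-firing moves, equivalently (for connected graphs) via an integral firing script `σ`. -/
def LinEquiv (G : Multigraph V) (D D' : V → ℤ) : Prop :=
  ∃ σ : V → ℤ, ∀ v, D' v = D v + ∑ w, (G.mul v w : ℤ) * (σ w - σ v)

/-- A divisor has positive rank if for every vertex `v` it is linearly equivalent to an
effective divisor placing at least one chip on `v`. -/
def PosRank (G : Multigraph V) (D : V → ℤ) : Prop :=
  ∀ v, ∃ D', G.LinEquiv D D' ∧ Effective D' ∧ 1 ≤ D' v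

/-- The (divisorial) gonality: the minimum degree of a positive-rank effective divisor. -/
def gonality (G : Multigraph V) : ℕ :=
  sInf {d : ℕ | ∃ D : V → ℤ, Effective D ∧ G.PosRank D ∧ degree D = (d : ℤ)}

/-- `f(G, v, k)`: the minimum degree of an effective divisor `D` on `G` such that
`D + k·v` has positive rank. -/
def fmin (G : Multigraph V) (v : V) (k : ℕ) : ℕ :=
  sInf {d : ℕ | ∃ D : V → ℤ, Effective D ∧
    G.PosRank (fun u => D u + if u = v then (k : ℤ) else 0) ∧ degree D = (d : ℤ)}

/-- Delete a vertex from a multigraph. -/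
def deleteVertex (G : Multigraph V) (v : V) : Multigraph {u : V // u ≠ v} where
  mul a b := G.mul a.1 b.1
  symm := fun a b => G.symm a.1 b.1
  loopless := fun a => G.loopless a.1

/-- Delete one single edge between `u` and `w` (if any) from a multigraph. -/
def deleteOneEdge (G : Multigraph V) (u w : V) : Multigraph V where
  mul x y := if (x = u ∧ y = w) ∨ (x = w ∧ y = u) then G.mul x y - 1 else G.mul x y
  symm := by
    intro x y
    by_cases h : (x = u ∧ y = w) ∨ (x = w ∧ y = u)
    · have h' : (y = u ∧ x = w) ∨ (y = w ∧ x = u) := by tauto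
      simp [h, h', G.symm x y]
    · have h' : ¬((y = u ∧ x = w) ∨ (y = w ∧ x = u)) := by tauto
      simp [h, h', G.symm x y]
  loopless := by
    intro v
    by_cases h : (v = u ∧ v = w) ∨ (v = w ∧ v = u)
    · simp [h, G.loopless]
    · simp [h, G.loopless]

/-- The adjacency move from `v` to `w` on a banana tree: the subset-firing move at the
connected component of `v` after removing the `v`-`w` edge bunch.  Its net effect is to
move `|E(v,w)|` chips from `v` to `w`. -/
def adjMove (G : Multigraph V) (v w : V) (D : V → ℤ) : V → ℤ :=
  fun u => if u = v then D u - (G.mul v w : ℤ)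
    else if u = w then D u + (G.mul v w : ℤ) else D u

/-- A single legal adjacency move: both divisors are effective and the second is
obtained from the first by an adjacency move between adjacent vertices. -/
def LegalAdjStep (G : Multigraph V) (D D' : V → ℤ) : Prop :=
  ∃ v w, G.underlying.Adj v w ∧ Effective D ∧ Effective D' ∧ D' = G.adjMove v w D

/-- A scramble: a collection of nonempty vertex sets (eggs), each inducing a connected
subgraph. -/
def IsScramble (G : Multigraph V) (S : Finset (Finset V)) : Prop :=
  ∀ X ∈ S, X.Nonempty ∧ (G.underlying.induce (X : Set V)).Connected

/-- A hitting set of a scramble: a set of vertices meeting every egg. -/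
def IsHittingSet (S : Finset (Finset V)) (T : Finset V) : Prop :=
  ∀ X ∈ S, (X ∩ T).Nonempty

/-- The hitting number of a scramble. -/
def hittingNumber (S : Finset (Finset V)) : ℕ∞ :=
  sInf {t : ℕ∞ | ∃ T : Finset V, IsHittingSet S T ∧ (T.card : ℕ∞) = t}

/-- The simple graph remaining after removing `c u w` of the edges of each bunch. -/
def cutGraph (G : Multigraph V) (c : V → V → ℕ) : SimpleGraph V where
  Adj u w := u ≠ w ∧ c u w < G.mul u w ∧ c w u < G.mul w u
  symm := ⟨fun u w h => ⟨h.1.symm, h.2.2, h.2.1⟩⟩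
  loopless := ⟨fun u h => h.1 rfl⟩

/-- `c` describes an egg-cut of the scramble `S`: a set of edges of `G` (given by the
number `c u w` of edges removed from each bunch) whose removal leaves at least two
connected components each completely containing an egg. -/
def IsEggCut (G : Multigraph V) (S : Finset (Finset V)) (c : V → V → ℕ) : Prop :=
  (∀ u w, c u w = c w u) ∧ (∀ u w, c u w ≤ G.mul u w) ∧
  ∃ X₁ ∈ S, ∃ X₂ ∈ S,
    (∀ x ∈ X₁, ∀ y ∈ X₁, (G.cutGraph c).Reachable x y) ∧
    (∀ x ∈ X₂, ∀ y ∈ X₂, (G.cutGraph c).Reachable x y) ∧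
    (∀ x ∈ X₁, ∀ y ∈ X₂, ¬ (G.cutGraph c).Reachable x y)

/-- The egg-cut number of a scramble (`⊤` if no egg-cut exists). -/
def eggCutNumber (G : Multigraph V) (S : Finset (Finset V)) : ℕ∞ :=
  sInf {t : ℕ∞ | ∃ c : V → V → ℕ, G.IsEggCut S c ∧
    ((∑ u, ∑ w, c u w : ℕ) : ℕ∞) = 2 * t}

/-- The order of a scramble: the minimum of its hitting number and egg-cut number. -/
def scrambleOrder (G : Multigraph V) (S : Finset (Finset V)) : ℕ∞ :=
  min (hittingNumber S) (G.eggCutNumber S)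

/-- The scramble number of a multigraph: the maximum order of a scramble on it. -/
def scrambleNumber (G : Multigraph V) : ℕ∞ :=
  sSup {m : ℕ∞ | ∃ S : Finset (Finset V), G.IsScramble S ∧ G.scrambleOrder S = m}

/-- The weight of a node `t` in a tree-cut decomposition `(T, X)`: the number of vertices
mapped to `t` plus the number of edges routed through `t` with neither endpoint mapped
to `t`. -/
def nodeWeight (G : Multigraph V) {N : Type} [Fintype N] (T : SimpleGraph N)
    (X : V → N) (t : N) : ℕ :=
  (Finset.univ.filter fun v => X v = t).card +
    (∑ u, ∑ w, if X u ≠ t ∧ X w ≠ t ∧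
        ¬ (T.deleteEdges {e | t ∈ e}).Reachable (X u) (X w)
      then G.mul u w else 0) / 2

/-- The weight of a link `pq` in a tree-cut decomposition `(T, X)`: the number of edges
of `G` routed through that link. -/
def linkWeight (G : Multigraph V) {N : Type} (T : SimpleGraph N)
    (X : V → N) (p q : N) : ℕ :=
  (∑ u, ∑ w, if ¬ (T.deleteEdges {s(p, q)}).Reachable (X u) (X w)
    then G.mul u w else 0) / 2

/-- The width of a tree-cut decomposition `(T, X)`: the maximum of all node and link
weights. -/
def tcdWidth (G : Multigraph V) {N : Type} [Fintype N] (T : SimpleGraph N)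
    (X : V → N) : ℕ :=
  max (Finset.univ.sup fun t => G.nodeWeight T X t)
      (Finset.univ.sup fun p : N × N =>
        if T.Adj p.1 p.2 then G.linkWeight T X p.1 p.2 else 0)

/-- The screewidth of a multigraph: the minimum width of a tree-cut decomposition. -/
def screewidth (G : Multigraph V) : ℕ :=
  sInf {w : ℕ | ∃ (m : ℕ) (T : SimpleGraph (Fin m)), T.IsTree ∧
    ∃ X : V → Fin m, G.tcdWidth T X = w}

/-- The banana path on `n+1` vertices `v_0, …, v_n`, with `a i` edges joining
`v_i` and `v_{i+1}` (for `0 ≤ i < n`). -/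
def bananaPath (n : ℕ) (a : ℕ → ℕ) : Multigraph (Fin (n + 1)) where
  mul i j := if i.val + 1 = j.val then a i.val else if j.val + 1 = i.val then a j.val else 0
  symm := by
    intro u v
    split_ifs <;> first | rfl | (exfalso; omega)
  loopless := by
    intro v
    have h : ¬ (v.val + 1 = v.val) := by omega
    simp [h]

/-- The banana star with central vertex `Sum.inl ()` and, for each `i : Fin k`,
`r i` leaves joined to the center by `a i` parallel edges. -/
def bananaStar (k : ℕ) (a r : Fin k → ℕ) :
    Multigraph (Unit ⊕ (Σ i : Fin k, Fin (r i))) where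
  mul x y :=
    match x, y with
    | Sum.inl _, Sum.inr ⟨i, _⟩ => a i
    | Sum.inr ⟨i, _⟩, Sum.inl _ => a i
    | _, _ => 0
  symm := by
    intro u v
    rcases u with u | ⟨i, li⟩ <;> rcases v with v | ⟨j, lj⟩ <;> rfl
  loopless := by
    intro v
    rcases v with v | ⟨i, li⟩ <;> rfl

end Multigraph

namespace LcmAux

open Multigraph

variable (n : ℕ) (b : ℕ → ℕ)

/-- Extension of a divisor to `ℕ` by zero. -/
def ext (E : Fin (n+1) → ℤ) (i : ℕ) : ℤ := if h : i < n+1 then E ⟨i, h⟩ else 0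

/-- Prefix sums of a divisor. -/
def pre (E : Fin (n+1) → ℤ) (j : ℕ) : ℤ := ∑ i ∈ Finset.range j, ext n E i

/-- Flow across the `j`-th bunch induced by a firing script. -/
def F (σ : Fin (n+1) → ℤ) (j : ℕ) : ℤ :=
  (if j < n then (b j : ℤ) else 0) * (ext n σ (j+1) - ext n σ j)

lemma ext_eq (E : Fin (n+1) → ℤ) (w : Fin (n+1)) : ext n E w.val = E w := by
  rw [ext, dif_pos w.isLt]

lemma lapAt (σ : Fin (n+1) → ℤ) (m : ℕ) (hm : m < n+1) :
    ∑ w : Fin (n+1), ((bananaPath n b).mul ⟨m, hm⟩ w : ℤ) * (σ w - σ ⟨m, hm⟩)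
      = F n b σ m - (if m = 0 then 0 else F n b σ (m-1)) := by
  have key : ∀ w : Fin (n+1),
      ((bananaPath n b).mul ⟨m, hm⟩ w : ℤ) * (σ w - σ ⟨m, hm⟩)
      = (fun i : ℕ => (if i = m+1 then (b m : ℤ) * (ext n σ i - ext n σ m) else 0)
          + (if i + 1 = m then (b i : ℤ) * (ext n σ i - ext n σ m) else 0)) w.val := by
    intro w
    have h1 : σ w = ext n σ w.val := (ext_eq n σ w).symm
    have h2 : σ ⟨m, hm⟩ = ext n σ m := (ext_eq n σ ⟨m, hm⟩).symm
    rw [h1, h2]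
    show ((if m + 1 = w.val then b m else if w.val + 1 = m then b w.val else 0 : ℕ) : ℤ)
        * (ext n σ w.val - ext n σ m)
      = (if w.val = m+1 then (b m : ℤ) * (ext n σ w.val - ext n σ m) else 0)
          + (if w.val + 1 = m then (b w.val : ℤ) * (ext n σ w.val - ext n σ m) else 0)
    by_cases hc1 : m + 1 = w.val
    · rw [if_pos hc1, if_pos hc1.symm, if_neg (show ¬((w.val:ℕ) + 1 = m) from by omega)]
      push_cast; ring
    · rw [if_neg hc1, if_neg (fun h : w.val = m + 1 => hc1 h.symm)]
      by_cases hc2 : (w.val : ℕ) + 1 = m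
      · rw [if_pos hc2, if_pos hc2]
        push_cast; ring
      · rw [if_neg hc2, if_neg hc2]
        push_cast; ring
  rw [show (∑ w : Fin (n+1), ((bananaPath n b).mul ⟨m, hm⟩ w : ℤ) * (σ w - σ ⟨m, hm⟩))
      = ∑ i ∈ range (n+1),
          ((if i = m+1 then (b m : ℤ) * (ext n σ i - ext n σ m) else 0)
          + (if i + 1 = m then (b i : ℤ) * (ext n σ i - ext n σ m) else 0)) from by
    rw [← Fin.sum_univ_eq_sum_range]
    exact Finset.sum_congr rfl fun w _ => key w]
  rw [Finset.sum_add_distrib]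
  have hA : (∑ i ∈ range (n+1), if i = m+1 then (b m : ℤ) * (ext n σ i - ext n σ m) else 0)
      = F n b σ m := by
    rw [Finset.sum_ite_eq' (range (n+1)) (m+1) (fun i => (b m : ℤ) * (ext n σ i - ext n σ m))]
    by_cases h : m < n
    · rw [if_pos (by simp; omega), F, if_pos h]
    · rw [if_neg (by simp; omega), F, if_neg h, zero_mul]
  have hB : (∑ i ∈ range (n+1), if i + 1 = m then (b i : ℤ) * (ext n σ i - ext n σ m) else 0)
      = - (if m = 0 then 0 else F n b σ (m-1)) := by
    by_cases h0 : m = 0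
    · rw [if_pos h0]
      rw [Finset.sum_eq_zero]
      · ring
      · intro i _; rw [if_neg (by omega)]
    · rw [if_neg h0]
      rw [show (∑ i ∈ range (n+1), if i + 1 = m then (b i : ℤ) * (ext n σ i - ext n σ m) else 0)
          = ∑ i ∈ range (n+1), if i = m-1 then (b i : ℤ) * (ext n σ i - ext n σ m) else 0 from
        Finset.sum_congr rfl fun i _ => by
          by_cases hc : i + 1 = m
          · rw [if_pos hc, if_pos (by omega)]
          · rw [if_neg hc, if_neg (by omega)]]
      rw [Finset.sum_ite_eq' (range (n+1)) (m-1) (fun i => (b i : ℤ) * (ext n σ i - ext n σ m))]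
      rw [if_pos (by simp; omega)]
      rw [F, if_pos (by omega), show m - 1 + 1 = m from by omega]
      ring
  rw [hA, hB]; ring

/-- The laplacian contribution at vertex `i`, extended by zero. -/
def lapv (σ : Fin (n+1) → ℤ) (i : ℕ) : ℤ :=
  if h : i < n+1 then
    ∑ w : Fin (n+1), ((bananaPath n b).mul ⟨i, h⟩ w : ℤ) * (σ w - σ ⟨i, h⟩) else 0

lemma prefixLap (σ : Fin (n+1) → ℤ) :
    ∀ j, j ≤ n → ∑ i ∈ range (j+1), lapv n b σ i = F n b σ j := by
  intro j
  induction j with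
  | zero =>
    intro _
    rw [Finset.sum_range_one, lapv, dif_pos (by omega), lapAt n b σ 0 (by omega)]
    simp
  | succ j ih =>
    intro hj
    rw [Finset.sum_range_succ, ih (by omega), lapv, dif_pos (by omega),
      lapAt n b σ (j+1) (by omega), if_neg (by omega), show j + 1 - 1 = j from by omega]
    ring

variable (D : Fin (n+1) → ℤ)

/-- Admissible prefix-sum sequences: exactly the prefix sums of effective divisors
linearly equivalent to `D`. -/
structure Adm (T : ℕ → ℤ) : Prop where
  zero : T 0 = 0
  tail : ∀ j, n+1 ≤ j → T j = pre n D (n+1)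
  mono : Monotone T
  dvd : ∀ j, j < n → (b j : ℤ) ∣ (T (j+1) - pre n D (j+1))

lemma adm_pre (E : Fin (n+1) → ℤ) (hlin : (bananaPath n b).LinEquiv D E)
    (heff : Effective E) : Adm n b D (pre n E) := by
  obtain ⟨σ, hσ⟩ := hlin
  have hext : ∀ i, ext n E i = ext n D i + lapv n b σ i := by
    intro i
    by_cases h : i < n+1
    · rw [ext, ext, lapv, dif_pos h, dif_pos h, dif_pos h]
      exact hσ ⟨i, h⟩
    · rw [ext, ext, lapv, dif_neg h, dif_neg h, dif_neg h]; ring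
  have hpre : ∀ j, j ≤ n → pre n E (j+1) = pre n D (j+1) + F n b σ j := by
    intro j hj
    rw [pre, pre, ← prefixLap n b σ j hj, ← Finset.sum_add_distrib]
    exact Finset.sum_congr rfl fun i _ => hext i
  have htotal : pre n E (n+1) = pre n D (n+1) := by
    rw [hpre n le_rfl, F, if_neg (by omega), zero_mul, add_zero]
  constructor
  · simp [pre]
  · intro j hj
    have hz : ∑ i ∈ Ico (n+1) j, ext n E i = 0 :=
      Finset.sum_eq_zero fun i hi => by
        rw [ext, dif_neg (by have := (Finset.mem_Ico.mp hi).1; omega)]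
    have : pre n E j = pre n E (n+1) := by
      rw [pre, pre, Finset.range_eq_Ico,
        ← Finset.sum_Ico_consecutive (ext n E) (Nat.zero_le (n+1)) hj, hz, add_zero, Finset.range_eq_Ico]
    rw [this, htotal]
  · apply monotone_nat_of_le_succ
    intro j
    have h1 : pre n E (j+1) = pre n E j + ext n E j := Finset.sum_range_succ _ _
    have h2 : 0 ≤ ext n E j := by
      rw [ext]; by_cases h : j < n+1
      · rw [dif_pos h]; exact heff _
      · rw [dif_neg h]
    linarith
  · intro j hj
    rw [hpre j (by omega), F, if_pos hj]
    exact ⟨ext n σ (j+1) - ext n σ j, by ring⟩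

lemma exists_divisor_of_adm (T : ℕ → ℤ) (hT : Adm n b D T) :
    ∃ E : Fin (n+1) → ℤ, (bananaPath n b).LinEquiv D E ∧ Effective E ∧
      ∀ i : ℕ, ext n E i = T (i+1) - T i := by
  set E : Fin (n+1) → ℤ := fun v => T (v.val+1) - T v.val with hE
  set q : ℕ → ℤ := fun j => (T (j+1) - pre n D (j+1)) / (b j : ℤ) with hq
  set σ : Fin (n+1) → ℤ := fun v => ∑ j ∈ range v.val, q j with hσ
  have hext : ∀ i, ext n E i = T (i+1) - T i := by
    intro i
    by_cases h : i < n+1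
    · rw [ext, dif_pos h]
    · rw [ext, dif_neg h, hT.tail i (by omega), hT.tail (i+1) (by omega)]; ring
  have hextσ : ∀ i (h : i < n+1), ext n σ i = ∑ j ∈ range i, q j := by
    intro i h; rw [ext, dif_pos h]
  have hF : ∀ j, j ≤ n → F n b σ j = T (j+1) - pre n D (j+1) := by
    intro j hj
    rcases Nat.lt_or_ge j n with h | h
    · rw [F, if_pos h, hextσ (j+1) (by omega), hextσ j (by omega), Finset.sum_range_succ,
        add_sub_cancel_left]
      exact Int.mul_ediv_cancel' (hT.dvd j h)
    · have hjn : j = n := by omega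
      rw [hjn, F, if_neg (by omega), zero_mul, hT.tail (n+1) le_rfl, sub_self]
  have hpreD : ∀ m (hm : m < n+1), pre n D (m+1) = pre n D m + D ⟨m, hm⟩ := by
    intro m hm
    rw [pre, Finset.sum_range_succ, ext, dif_pos hm, pre]
  refine ⟨E, ⟨σ, ?_⟩, fun v => by
      have := hT.mono (Nat.le_succ v.val); simp only [hE]; linarith, hext⟩
  intro v
  obtain ⟨m, hm⟩ := v
  rw [lapAt n b σ m hm]
  by_cases h0 : m = 0
  · subst h0
    rw [if_pos rfl, hF 0 (by omega)]
    have h1 : pre n D 1 = pre n D 0 + D ⟨0, hm⟩ := hpreD 0 hm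
    have h2 : pre n D 0 = 0 := by simp [pre]
    have h3 : T 0 = 0 := hT.zero
    simp only [hE]
    push_cast
    linarith
  · rw [if_neg h0, hF m (by omega), hF (m-1) (by omega),
      show m - 1 + 1 = m from by omega]
    have h1 : pre n D (m+1) = pre n D m + D ⟨m, hm⟩ := hpreD m hm
    simp only [hE]
    linarith

lemma exists_flat (g : ℕ → ℤ) (hg : Monotone g) (B sN M : ℕ) (hsN : 1 ≤ sN)
    (hB : g M ≤ g 0 + B) (hM : (B+1) * sN ≤ M + 1) :
    ∃ i₀, i₀ + sN ≤ M + 1 ∧ g (i₀ + (sN - 1)) = g i₀ := by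
  by_contra hc
  push_neg at hc
  have hstep : ∀ i₀, i₀ + sN ≤ M + 1 → g i₀ + 1 ≤ g (i₀ + (sN - 1)) := by
    intro i₀ h
    have h1 := hc i₀ h
    have h2 := hg (Nat.le_add_right i₀ (sN-1))
    omega
  have hq : ∀ c, c ≤ B → g 0 + (c : ℤ) + 1 ≤ g (c * sN + (sN - 1)) := by
    intro c
    induction c with
    | zero =>
      intro _
      have hle : 0 + sN ≤ M + 1 := by
        calc 0 + sN = 1 * sN := by ring
        _ ≤ (B+1) * sN := Nat.mul_le_mul_right _ (by omega)
        _ ≤ M + 1 := hM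
      have := hstep 0 hle
      simpa using this
    | succ c ih =>
      intro h
      have hmul : (c+1) * sN = c * sN + sN := by ring
      have h1 : (c+1) * sN + sN ≤ M + 1 := by
        have : (c+1+1) * sN ≤ (B+1) * sN := Nat.mul_le_mul_right _ (by omega)
        calc (c+1) * sN + sN = (c+1+1) * sN := by ring
        _ ≤ (B+1) * sN := this
        _ ≤ M + 1 := hM
      have h2 := hstep ((c+1) * sN) h1
      have h3 := ih (by omega)
      have h4 : g (c * sN + (sN - 1)) ≤ g ((c+1) * sN) := hg (by rw [hmul]; omega)
      push_cast
      push_cast at h3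
      linarith
  have h5 := hq B le_rfl
  have hmul : (B+1) * sN = B * sN + sN := by ring
  have h8 : B * sN + sN ≤ M + 1 := by rw [← hmul]; exact hM
  have h6 : g (B * sN + (sN - 1)) ≤ g M := hg (by omega)
  linarith

lemma mod_cover (sN : ℕ) (hs : 1 ≤ sN) (t : ℕ) (ht : t < sN) (i₀ : ℕ) :
    ∃ i, i₀ ≤ i ∧ i < i₀ + sN ∧ i % sN = t := by
  obtain ⟨c, r, hr, hdecomp⟩ : ∃ c r, r < sN ∧ i₀ = sN * c + r :=
    ⟨i₀ / sN, i₀ % sN, Nat.mod_lt _ (by omega), by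
      have := Nat.div_add_mod i₀ sN; omega⟩
  have hmod : ∀ c' : ℕ, (sN * c' + t) % sN = t := by
    intro c'; rw [Nat.mul_add_mod]; exact Nat.mod_eq_of_lt ht
  rcases le_or_gt r t with h | h
  · exact ⟨sN * c + t, by omega, by omega, hmod c⟩
  · refine ⟨sN * (c+1) + t, ?_, ?_, hmod (c+1)⟩ <;>
    · have : sN * (c+1) = sN * c + sN := by ring
      omega

lemma exists_minmax (W : Fin (n+1) → ℕ → ℤ) (hW : ∀ m, Adm n b D (W m)) :
    ∃ u U : ℕ → ℤ, Adm n b D u ∧ Adm n b D U ∧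
      ∀ (m : Fin (n+1)) (j : ℕ), u j ≤ W m j ∧ W m j ≤ U j := by
  have hne : (Finset.univ : Finset (Fin (n+1))).Nonempty := Finset.univ_nonempty
  refine ⟨fun j => Finset.univ.inf' hne (fun m => W m j),
          fun j => Finset.univ.sup' hne (fun m => W m j), ?_, ?_, ?_⟩
  · constructor
    · show Finset.univ.inf' hne (fun m => W m 0) = 0
      obtain ⟨m, -, hm⟩ := Finset.exists_mem_eq_inf' hne (fun m => W m 0)
      rw [hm, (hW m).zero]
    · intro j hj
      show Finset.univ.inf' hne (fun m => W m j) = pre n D (n+1)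
      obtain ⟨m, -, hm⟩ := Finset.exists_mem_eq_inf' hne (fun m => W m j)
      rw [hm, (hW m).tail j hj]
    · intro j j' hjj
      show Finset.univ.inf' hne (fun m => W m j) ≤ Finset.univ.inf' hne (fun m => W m j')
      apply Finset.le_inf'
      intro m _
      exact le_trans (Finset.inf'_le _ (Finset.mem_univ m)) ((hW m).mono hjj)
    · intro j hj
      show (b j : ℤ) ∣ (Finset.univ.inf' hne (fun m => W m (j+1)) - pre n D (j+1))
      obtain ⟨m, -, hm⟩ := Finset.exists_mem_eq_inf' hne (fun m => W m (j+1))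
      rw [hm]
      exact (hW m).dvd j hj
  · constructor
    · show Finset.univ.sup' hne (fun m => W m 0) = 0
      obtain ⟨m, -, hm⟩ := Finset.exists_mem_eq_sup' hne (fun m => W m 0)
      rw [hm, (hW m).zero]
    · intro j hj
      show Finset.univ.sup' hne (fun m => W m j) = pre n D (n+1)
      obtain ⟨m, -, hm⟩ := Finset.exists_mem_eq_sup' hne (fun m => W m j)
      rw [hm, (hW m).tail j hj]
    · intro j j' hjj
      show Finset.univ.sup' hne (fun m => W m j) ≤ Finset.univ.sup' hne (fun m => W m j')
      apply Finset.sup'_le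
      intro m _
      exact le_trans ((hW m).mono hjj) (Finset.le_sup' (fun m => W m j') (Finset.mem_univ m))
    · intro j hj
      show (b j : ℤ) ∣ (Finset.univ.sup' hne (fun m => W m (j+1)) - pre n D (j+1))
      obtain ⟨m, -, hm⟩ := Finset.exists_mem_eq_sup' hne (fun m => W m (j+1))
      rw [hm]
      exact (hW m).dvd j hj
  · intro m j
    exact ⟨Finset.inf'_le _ (Finset.mem_univ m), Finset.le_sup' (fun m => W m j) (Finset.mem_univ m)⟩

end LcmAux
open Multigraph in
/-- If a banana path contains a string of consecutive vertices
`v_k, …, v_{k+ℓ}` whose edge bunch sizes follow the repeating pattern `a_1, …, a_s`,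
`L = lcm(a_1, …, a_s)` and `ℓ + 1 ≥ s·L²`, then every positive-rank divisor is linearly
equivalent to an effective divisor placing at least `L` chips on `v_k, …, v_{k+ℓ}`. -/
theorem lcm_string
    (n : ℕ) (b : ℕ → ℕ) (hb : ∀ i < n, 0 < b i)
    (s : ℕ) (hs : 0 < s) (a : ℕ → ℕ) (ha : ∀ i < s, 0 < a i)
    (k ℓ : ℕ) (hkl : k + ℓ ≤ n)
    (hpat : ∀ i < ℓ, b (k + i) = a (i % s))
    (L : ℕ) (hL : L = (Finset.range s).lcm a)
    (hlen : s * L ^ 2 ≤ ℓ + 1)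
    (D : Fin (n + 1) → ℤ) (hD : (bananaPath n b).PosRank D) :
    ∃ D' : Fin (n + 1) → ℤ, (bananaPath n b).LinEquiv D D' ∧ Effective D' ∧
      (L : ℤ) ≤ ∑ v : Fin (n + 1), if k ≤ v.val ∧ v.val ≤ k + ℓ then D' v else 0 := by
  classical
  have hL1 : 1 ≤ L := by
    rcases Nat.eq_zero_or_pos L with h0 | h1
    · exfalso
      rw [hL] at h0
      obtain ⟨t, ht, hat⟩ := Finset.lcm_eq_zero_iff.mp h0
      have := ha t (by simpa using ht)
      omega
    · omega
  have hkn : k ≤ n := by omega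
  -- witnesses for positive rank
  have hWex : ∀ m : Fin (n+1), ∃ T, LcmAux.Adm n b D T ∧ T m.val + 1 ≤ T (m.val + 1) := by
    intro m
    obtain ⟨E, hlin, heff, hE1⟩ := hD m
    refine ⟨LcmAux.pre n E, LcmAux.adm_pre n b D E hlin heff, ?_⟩
    have h1 : LcmAux.pre n E (m.val + 1)
        = LcmAux.pre n E m.val + LcmAux.ext n E m.val := Finset.sum_range_succ _ _
    have h2 : LcmAux.ext n E m.val = E m := LcmAux.ext_eq n E m
    rw [h1, h2]
    linarith
  choose W hWa hWj using hWex
  obtain ⟨u, U, hu, hU, huU⟩ := LcmAux.exists_minmax n b D W hWa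
  have hjump : ∀ m : ℕ, m ≤ n → u m + 1 ≤ U (m+1) := by
    intro m hm
    have hmlt : m < n + 1 := by omega
    have h2 : W ⟨m, hmlt⟩ m + 1 ≤ W ⟨m, hmlt⟩ (m+1) := hWj ⟨m, hmlt⟩
    have h1 := (huU ⟨m, hmlt⟩ m).1
    have h3 := (huU ⟨m, hmlt⟩ (m+1)).2
    linarith
  have huleU : ∀ j, u j ≤ U j := fun j =>
    le_trans (huU ⟨0, by omega⟩ j).1 (huU ⟨0, by omega⟩ j).2
  -- the key combinatorial statement
  have key : ∃ T, LcmAux.Adm n b D T ∧ (L:ℤ) ≤ T (k + ℓ + 1) - T k := by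
    rcases eq_or_lt_of_le hL1 with h1 | hL2
    · -- L = 1
      have hklt : k < n + 1 := by omega
      refine ⟨W ⟨k, hklt⟩, hWa _, ?_⟩
      have h2 : W ⟨k, hklt⟩ k + 1 ≤ W ⟨k, hklt⟩ (k+1) := hWj ⟨k, hklt⟩
      have h3 : W ⟨k, hklt⟩ (k+1) ≤ W ⟨k, hklt⟩ (k+ℓ+1) := (hWa _).mono (by omega)
      rw [← h1]
      push_cast
      linarith
    · by_contra hcon
      push_neg at hcon
      have hbound : ∀ T, LcmAux.Adm n b D T → T (k+ℓ+1) - T k ≤ (L:ℤ) - 1 := by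
        intro T hT
        have := hcon T hT
        omega
      -- the splice of u and U at position k is admissible
      have hSadm : LcmAux.Adm n b D (fun j => if j ≤ k then u j else U j) := by
        constructor
        · show (if 0 ≤ k then u 0 else U 0) = 0
          rw [if_pos (Nat.zero_le k)]; exact hu.zero
        · intro j hj
          show (if j ≤ k then u j else U j) = LcmAux.pre n D (n+1)
          rw [if_neg (by omega)]
          exact hU.tail j hj
        · apply monotone_nat_of_le_succ
          intro j
          show (if j ≤ k then u j else U j) ≤ (if j + 1 ≤ k then u (j+1) else U (j+1))
          by_cases hc1 : j + 1 ≤ k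
          · rw [if_pos (by omega), if_pos hc1]; exact hu.mono (Nat.le_succ j)
          · by_cases hc2 : j ≤ k
            · rw [if_pos hc2, if_neg hc1]
              have h3 : j = k := by omega
              rw [h3]
              have := hjump k hkn
              linarith
            · rw [if_neg hc2, if_neg hc1]; exact hU.mono (Nat.le_succ j)
        · intro j hj
          show (b j : ℤ) ∣ ((if j + 1 ≤ k then u (j+1) else U (j+1)) - LcmAux.pre n D (j+1))
          by_cases hc1 : j + 1 ≤ k
          · rw [if_pos hc1]; exact hu.dvd j hj
          · rw [if_neg hc1]; exact hU.dvd j hj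
      have hUu : U (k+ℓ+1) ≤ u k + ((L:ℤ) - 1) := by
        have h1 := hbound _ hSadm
        simp only [if_pos (le_refl k), if_neg (show ¬ (k+ℓ+1 ≤ k) from by omega)] at h1
        linarith
      have hbox : ∀ j, k ≤ j → j ≤ k+ℓ+1 → u k ≤ u j ∧ U j ≤ u k + ((L:ℤ)-1) := by
        intro j h1 h2
        exact ⟨hu.mono h1, le_trans (hU.mono h2) hUu⟩
      have hdvdw : ∀ i, i < ℓ → (a (i % s) : ℤ) ∣ (U (k+i+1) - u (k+i+1)) := by
        intro i hi
        have h1 := hu.dvd (k+i) (by omega)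
        have h2 := hU.dvd (k+i) (by omega)
        rw [hpat i hi] at h1 h2
        have h3 := dvd_sub h2 h1
        have h4 : (U (k+i+1) - LcmAux.pre n D (k+i+1))
            - (u (k+i+1) - LcmAux.pre n D (k+i+1)) = U (k+i+1) - u (k+i+1) := by ring
        rw [h4] at h3
        exact h3
      rcases Nat.lt_or_ge s 2 with hs1 | hs2
      · -- the case s = 1
        have hseq : s = 1 := by omega
        subst hseq
        have hLa : L = a 0 := by
          rw [hL, Finset.range_one, Finset.lcm_singleton]
          simp
        have hLsq : L * L ≤ ℓ + 1 := by
          have : L^2 = L*L := sq L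
          omega
        have h2L : 2 * L ≤ L * L := Nat.mul_le_mul_right L (by omega)
        have hl1 : 1 ≤ ℓ := by omega
        have hEq : ∀ i, i < ℓ → u (k+i+1) = U (k+i+1) := by
          intro i hi
          have h1 := hdvdw i hi
          rw [Nat.mod_one, ← hLa] at h1
          have h2 := (hbox (k+i+1) (by omega) (by omega)).2
          have h3 := (hbox (k+i+1) (by omega) (by omega)).1
          have h4 := huleU (k+i+1)
          by_contra hne
          have h5 : 0 < U (k+i+1) - u (k+i+1) := by omega
          have h6 := Int.le_of_dvd h5 h1
          omega
        have hchain : ∀ i, i ≤ ℓ - 1 → u k + 1 + (i:ℤ) ≤ U (k+i+1) := by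
          intro i
          induction i with
          | zero => intro _; simpa using hjump k hkn
          | succ i ih =>
            intro hi
            have h1 := hjump (k+i+1) (by omega)
            have h2 := hEq i (by omega)
            have h3 := ih (by omega)
            rw [show k+(i+1)+1 = k+i+1+1 from rfl]
            push_cast
            linarith
        have hfin := hchain (ℓ-1) le_rfl
        rw [show k+(ℓ-1)+1 = k+ℓ from by omega] at hfin
        have h5 := (hbox (k+ℓ) (by omega) (by omega)).2
        have hc1 : ((ℓ-1 : ℕ) : ℤ) = (ℓ:ℤ) - 1 := by omega
        rw [hc1] at hfin
        have h6 : (ℓ:ℤ) ≤ (L:ℤ) - 1 := by linarith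
        have h7 : ℓ ≤ L - 1 := by omega
        omega
      · -- the case s ≥ 2
        have hl3 : (2*L - 1) * s ≤ ℓ := by
          zify [show (1:ℕ) ≤ 2*L from by omega]
          have h2 : (s:ℤ) * (L:ℤ)^2 ≤ (ℓ:ℤ) + 1 := by exact_mod_cast hlen
          have h3 : (1:ℤ) ≤ (s:ℤ) := by exact_mod_cast hs
          have h4 : (2:ℤ) ≤ (L:ℤ) := by exact_mod_cast hL2
          have h5 : (1:ℤ) ≤ ((L:ℤ)-1)^2 := by nlinarith
          have h6 : (1:ℤ)*1 ≤ (s:ℤ) * ((L:ℤ)-1)^2 :=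
            mul_le_mul h3 h5 (by norm_num) (by linarith)
          have h7 : (s:ℤ)*(L:ℤ)^2 = (s:ℤ)*(((L:ℤ)-1)^2) + (2*(L:ℤ)-1)*(s:ℤ) := by ring
          nlinarith
        have hl1 : 1 ≤ ℓ := by
          have : 1*1 ≤ (2*L-1)*s := Nat.mul_le_mul (by omega) (by omega)
          omega
        have hgmono : Monotone (fun i => u (k+i+1) + U (k+i+1)) := by
          intro i j hij
          have h1 := hu.mono (show k+i+1 ≤ k+j+1 by omega)
          have h2 := hU.mono (show k+i+1 ≤ k+j+1 by omega)
          simpa using add_le_add h1 h2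
        have hgB : (fun i => u (k+i+1) + U (k+i+1)) (ℓ-1)
            ≤ (fun i => u (k+i+1) + U (k+i+1)) 0 + ((2*L-2 : ℕ) : ℤ) := by
          simp only
          rw [show k+(ℓ-1)+1 = k+ℓ from by omega, show k+0+1 = k+1 from rfl]
          have h1 := (hbox (k+ℓ) (by omega) (by omega)).2
          have h2 := huleU (k+ℓ)
          have h4 := hu.mono (Nat.le_succ k)
          have h5 := hjump k hkn
          have h6 : ((2*L-2 : ℕ) : ℤ) = 2*(L:ℤ) - 2 := by omega
          rw [h6]
          linarith
        obtain ⟨i₀, hi₀a, hi₀b⟩ := LcmAux.exists_flat (fun i => u (k+i+1) + U (k+i+1))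
          hgmono (2*L-2) s (ℓ-1) (by omega) hgB
          (by rw [show 2*L-2+1 = 2*L-1 from by omega, show ℓ-1+1 = ℓ from by omega]; exact hl3)
        have hi₀ℓ : i₀ + s ≤ ℓ := by omega
        have hconst : ∀ i, i₀ ≤ i → i ≤ i₀ + (s-1) →
            u (k+i+1) = u (k+i₀+1) ∧ U (k+i+1) = U (k+i₀+1) := by
          intro i h1 h2
          have hga : (fun i => u (k+i+1) + U (k+i+1)) i₀
              ≤ (fun i => u (k+i+1) + U (k+i+1)) i := hgmono h1
          have hgb : (fun i => u (k+i+1) + U (k+i+1)) i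
              ≤ (fun i => u (k+i+1) + U (k+i+1)) i₀ :=
            le_trans (hgmono h2) (le_of_eq hi₀b)
          simp only at hga hgb
          have hu1 : u (k+i₀+1) ≤ u (k+i+1) := hu.mono (by omega)
          have hU1 : U (k+i₀+1) ≤ U (k+i+1) := hU.mono (by omega)
          constructor <;> linarith
        have hjmp2 := hjump (k+i₀+1) (by omega)
        have hcon2 := (hconst (i₀+1) (by omega) (by omega)).2
        rw [show k+(i₀+1)+1 = k+i₀+1+1 from rfl] at hcon2
        have hΔ1 : u (k+i₀+1) + 1 ≤ U (k+i₀+1) := by linarith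
        have hbox2 := hbox (k+i₀+1) (by omega) (by omega)
        have hdvdΔ : ∀ t, t < s → (a t : ℤ) ∣ (U (k+i₀+1) - u (k+i₀+1)) := by
          intro t ht
          obtain ⟨i, hia, hib, hic⟩ := LcmAux.mod_cover s (by omega) t ht i₀
          have hiℓ : i < ℓ := by omega
          have h1 := hdvdw i hiℓ
          rw [hic] at h1
          obtain ⟨e1, e2⟩ := hconst i hia (by omega)
          rw [e1, e2] at h1
          exact h1
        have hLdvd : (L:ℤ) ∣ (U (k+i₀+1) - u (k+i₀+1)) := by
          have hnn : 0 ≤ U (k+i₀+1) - u (k+i₀+1) := by linarith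
          obtain ⟨Δ, hΔ⟩ : ∃ Δ : ℕ, U (k+i₀+1) - u (k+i₀+1) = (Δ:ℤ) :=
            ⟨(U (k+i₀+1) - u (k+i₀+1)).toNat, (Int.toNat_of_nonneg hnn).symm⟩
          rw [hΔ]
          apply Int.natCast_dvd_natCast.mpr
          rw [hL]
          apply Finset.lcm_dvd
          intro t ht
          have h1 := hdvdΔ t (Finset.mem_range.mp ht)
          rw [hΔ] at h1
          exact_mod_cast h1
        have hfinal := Int.le_of_dvd (by linarith) hLdvd
        have h1 := hbox2.1
        have h2 := hbox2.2
        linarith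
  -- convert the admissible sequence back into a divisor
  obtain ⟨T, hT, hTwin⟩ := key
  obtain ⟨E, hlin, heff, hext⟩ := LcmAux.exists_divisor_of_adm n b D T hT
  refine ⟨E, hlin, heff, ?_⟩
  have h1 : (∑ v : Fin (n+1), if k ≤ v.val ∧ v.val ≤ k+ℓ then E v else 0)
      = ∑ i ∈ Finset.range (n+1), (if k ≤ i ∧ i ≤ k+ℓ then LcmAux.ext n E i else 0) := by
    rw [← Fin.sum_univ_eq_sum_range (fun i => if k ≤ i ∧ i ≤ k+ℓ then LcmAux.ext n E i else 0)
      (n+1)]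
    apply Finset.sum_congr rfl
    intro v _
    by_cases h : k ≤ v.val ∧ v.val ≤ k+ℓ
    · rw [if_pos h, if_pos h, LcmAux.ext_eq]
    · rw [if_neg h, if_neg h]
  rw [h1]
  have h2 : (∑ i ∈ Finset.range (n+1), if k ≤ i ∧ i ≤ k+ℓ then LcmAux.ext n E i else 0)
      = ∑ i ∈ Finset.Ico k (k+ℓ+1), LcmAux.ext n E i := by
    rw [show (∑ i ∈ Finset.range (n+1), if k ≤ i ∧ i ≤ k+ℓ then LcmAux.ext n E i else 0)
        = ∑ i ∈ Finset.range (n+1),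
            (if i ∈ Finset.Ico k (k+ℓ+1) then LcmAux.ext n E i else 0) from
      Finset.sum_congr rfl fun i _ => by
        by_cases h : k ≤ i ∧ i ≤ k+ℓ
        · rw [if_pos h, if_pos (Finset.mem_Ico.mpr ⟨h.1, by omega⟩)]
        · rw [if_neg h, if_neg (fun hc => h ⟨(Finset.mem_Ico.mp hc).1, by
            have := (Finset.mem_Ico.mp hc).2; omega⟩)]]
    rw [Finset.sum_ite_mem]
    congr 1
    apply Finset.inter_eq_right.mpr
    intro x hx
    have := Finset.mem_Ico.mp hx
    exact Finset.mem_range.mpr (by omega)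
  rw [h2]
  rw [Finset.sum_congr rfl (fun i _ => hext i)]
  rw [Finset.sum_Ico_eq_sub _ (show k ≤ k+ℓ+1 by omega)]
  rw [Finset.sum_range_sub (fun i => T i), Finset.sum_range_sub (fun i => T i)]
  linarith
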